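/- Let F = ⟨f_1,…,f_r⟩ be a flip sequence transforming T_0 into T_r, and let π(F) be a permutation of the flips of F that is a topological sort of the DAG D_F (so π(F) is itself a valid flip sequence transforming T_0 into T_r). Then the DAG D_{π(F)}, defined from the sequence π(F), is equal (as a directed graph on the same set of flips) to D_F. -/

import Mathlib

open Finset

/-- Two vertices of the convex `m`-gon are adjacent in the cyclic order. -/
def PolyAdj (m : ℕ) (a b : Fin m) : Prop :=
  (a.val + 1) % m = b.val ∨ (b.val + 1) % m = a.val

/-- `e` is a diagonal of the convex `m`-gon: an unordered pair of distinct,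
non-adjacent vertices. -/
def IsDiagonal (m : ℕ) (e : Finset (Fin m)) : Prop :=
  ∃ a b : Fin m, a ≠ b ∧ ¬ PolyAdj m a b ∧ e = {a, b}

/-- The cyclic distance from `a` to `x`, going forwards in the cyclic order. -/
def cycDist (m : ℕ) (a x : Fin m) : ℕ := (x.val + m - a.val) % m

/-- `x` lies strictly between `a` and `b` in the cyclic order. -/
def CycBtw (m : ℕ) (a x b : Fin m) : Prop :=
  0 < cycDist m a x ∧ cycDist m a x < cycDist m a b

/-- Two chords cross: their endpoints strictly interleave in the cyclic order. -/
def Cross (m : ℕ) (e₁ e₂ : Finset (Fin m)) : Prop :=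
  ∃ a b c d : Fin m, e₁ = {a, b} ∧ e₂ = {c, d} ∧ CycBtw m a c b ∧ CycBtw m b d a

/-- A triangulation of the convex `m`-gon: a maximal set of pairwise
non-crossing diagonals. -/
structure Triangulation (m : ℕ) where
  diagonals : Finset (Finset (Fin m))
  isDiagonal : ∀ e ∈ diagonals, IsDiagonal m e
  noncross : ∀ e₁ ∈ diagonals, ∀ e₂ ∈ diagonals, ¬ Cross m e₁ e₂
  maximal : ∀ e, IsDiagonal m e → (∀ e' ∈ diagonals, ¬ Cross m e e') → e ∈ diagonals

/-- `e` is a side in the triangulation `T`: either an edge of the polygon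
(between cyclically adjacent vertices) or a diagonal of `T`. -/
def IsSide (m : ℕ) (T : Triangulation m) (e : Finset (Fin m)) : Prop :=
  (∃ a b : Fin m, PolyAdj m a b ∧ e = {a, b}) ∨ e ∈ T.diagonals

/-- `t` is a triangle of the triangulation `T`: three distinct vertices each
pair of which forms a side of `T`. -/
def IsTriangle (m : ℕ) (T : Triangulation m) (t : Finset (Fin m)) : Prop :=
  ∃ a b c : Fin m, a ≠ b ∧ a ≠ c ∧ b ≠ c ∧ t = {a, b, c} ∧
    IsSide m T {a, b} ∧ IsSide m T {a, c} ∧ IsSide m T {b, c}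

/-- Two diagonals of `T` are neighbors if they both belong to `T` and lie on a
common triangle of `T`; they are independent otherwise. -/
def Neighbor (m : ℕ) (T : Triangulation m) (e₁ e₂ : Finset (Fin m)) : Prop :=
  e₁ ∈ T.diagonals ∧ e₂ ∈ T.diagonals ∧
    ∃ t, IsTriangle m T t ∧ e₁ ⊆ t ∧ e₂ ⊆ t

/-- `T'` is obtained from `T` by flipping the diagonal `e`, which removes `e`
and creates the new diagonal `e'` (necessarily the opposite diagonal of the
quadrilateral formed by the two triangles of `T` containing `e`, since `T'` is
again a triangulation). -/
def IsFlip (m : ℕ) (T T' : Triangulation m) (e e' : Finset (Fin m)) : Prop :=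
  e ∈ T.diagonals ∧ e' ∉ T.diagonals ∧
    T'.diagonals = insert e' (T.diagonals.erase e)

/-- `Ts 0, Ts 1, …, Ts r` is a sequence of triangulations in which `Ts (i+1)`
is obtained from `Ts i` by performing the flip `F i`, which removes the
diagonal `(F i).1` and creates the diagonal `(F i).2`. -/
def IsFlipSeq (m r : ℕ) (F : ℕ → Finset (Fin m) × Finset (Fin m))
    (Ts : ℕ → Triangulation m) : Prop :=
  ∀ i < r, IsFlip m (Ts i) (Ts (i + 1)) (F i).1 (F i).2

/-- The flip distance between two triangulations: the minimum length of a flip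
sequence transforming one into the other. -/
noncomputable def FlipDist (m : ℕ) (T T' : Triangulation m) : ℕ :=
  sInf {r | ∃ F Ts, IsFlipSeq m r F Ts ∧ Ts 0 = T ∧ Ts r = T'}

/-- `e` is a free-diagonal of `T` with respect to `Tfinal`: flipping `e` in `T`
creates a diagonal belonging to `Tfinal`. -/
def FreeDiagonal (m : ℕ) (T Tfinal : Triangulation m) (e : Finset (Fin m)) : Prop :=
  ∃ T' e', IsFlip m T T' e e' ∧ e' ∈ Tfinal.diagonals

/-- Arc of the DAG `D_F` associated to the flip sequence `F` with triangulation
sequence `Ts`: there is an arc from flip `i` to flip `j` when `i < j` and the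
diagonal created by flip `i` is a neighbor of the diagonal removed by flip `j`
in the triangulation `Ts j` in which flip `j` is performed. -/
def Arc (m r : ℕ) (F : ℕ → Finset (Fin m) × Finset (Fin m))
    (Ts : ℕ → Triangulation m) (i j : ℕ) : Prop :=
  i < j ∧ j < r ∧ Neighbor m (Ts j) (F i).2 (F j).1

section Prelims

variable {m : ℕ}

/-- Unordered pair equality elimination. -/
lemma pair_eq {α : Type*} [DecidableEq α] {a b c d : α}
    (h : ({a, b} : Finset α) = {c, d}) : (a = c ∧ b = d) ∨ (a = d ∧ b = c) := by
  have ha : a = c ∨ a = d := by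
    have : a ∈ ({c, d} : Finset α) := h ▸ (by simp)
    simpa using this
  have hb : b = c ∨ b = d := by
    have : b ∈ ({c, d} : Finset α) := h ▸ (by simp)
    simpa using this
  have hc : c = a ∨ c = b := by
    have : c ∈ ({a, b} : Finset α) := h ▸ (by simp); simpa using this
  have hd : d = a ∨ d = b := by
    have : d ∈ ({a, b} : Finset α) := h ▸ (by simp); simpa using this
  rcases ha with rfl | rfl
  · rcases hd with rfl | rfl
    · tauto
    · tauto
  · rcases hc with rfl | rfl
    · tauto
    · tauto


/-- Closed form for `cycDist`. -/
lemma cycd (a x : Fin m) :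
    cycDist m a x = if a.val ≤ x.val then x.val - a.val else x.val + m - a.val := by
  have hx := x.isLt
  have ha := a.isLt
  unfold cycDist
  split_ifs with h
  · have h1 : x.val + m - a.val = (x.val - a.val) + m := by omega
    rw [h1, Nat.add_mod_right, Nat.mod_eq_of_lt (by omega)]
  · exact Nat.mod_eq_of_lt (by omega)

lemma btw_asymm {a x b : Fin m} (h1 : CycBtw m a x b) (h2 : CycBtw m b x a) : False := by
  obtain ⟨h1a, h1b⟩ := h1; obtain ⟨h2a, h2b⟩ := h2
  have := a.isLt; have := x.isLt; have := b.isLt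
  simp only [cycd] at h1a h1b h2a h2b
  split_ifs at h1a h1b h2a h2b <;> omega

lemma cyc_trichot {a b : Fin m} (x : Fin m) (hxa : x ≠ a) (hxb : x ≠ b) (hab : a ≠ b) :
    CycBtw m a x b ∨ CycBtw m b x a := by
  have := a.isLt; have := x.isLt; have := b.isLt
  have h1 : a.val ≠ b.val := fun h => hab (Fin.ext h)
  have h2 : x.val ≠ a.val := fun h => hxa (Fin.ext h)
  have h3 : x.val ≠ b.val := fun h => hxb (Fin.ext h)
  simp only [CycBtw, cycd]
  split_ifs <;> omega

/-- Elimination of `PolyAdj` into pure arithmetic. -/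
lemma polyadj_elim {a b : Fin m} (h : PolyAdj m a b) :
    (b.val = a.val + 1 ∨ (a.val = m - 1 ∧ b.val = 0)) ∨
    (a.val = b.val + 1 ∨ (b.val = m - 1 ∧ a.val = 0)) := by
  have := a.isLt; have := b.isLt
  rcases h with h | h
  · left
    rcases Nat.lt_or_ge (a.val + 1) m with h' | h'
    · left; rw [Nat.mod_eq_of_lt h'] at h; omega
    · right
      have hm : a.val + 1 = m := by omega
      rw [hm, Nat.mod_self] at h; omega
  · right
    rcases Nat.lt_or_ge (b.val + 1) m with h' | h'
    · left; rw [Nat.mod_eq_of_lt h'] at h; omega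
    · right
      have hm : b.val + 1 = m := by omega
      rw [hm, Nat.mod_self] at h; omega

lemma polyadj_intro_arith (hm : 3 ≤ m) {a b : Fin m}
    (h : (b.val = a.val + 1 ∨ (a.val = m - 1 ∧ b.val = 0)) ∨
         (a.val = b.val + 1 ∨ (b.val = m - 1 ∧ a.val = 0))) : PolyAdj m a b := by
  have := a.isLt; have := b.isLt
  rcases h with (h | ⟨h1, h2⟩) | (h | ⟨h1, h2⟩)
  · left; rw [Nat.mod_eq_of_lt (by omega)]; omega
  · left; have : a.val + 1 = m := by omega
    rw [this, Nat.mod_self]; omega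
  · right; rw [Nat.mod_eq_of_lt (by omega)]; omega
  · right; have : b.val + 1 = m := by omega
    rw [this, Nat.mod_self]; omega

lemma polyadj_symm {a b : Fin m} (h : PolyAdj m a b) : PolyAdj m b a := by
  rcases h with h | h
  · right; exact h
  · left; exact h

/-- Facts about distances across a diagonal. -/
lemma diag_dist (hm : 3 ≤ m) {e : Finset (Fin m)} (hd : IsDiagonal m e)
    {a b : Fin m} (he : e = {a, b}) :
    2 ≤ cycDist m a b ∧ cycDist m a b ≤ m - 2 := by
  obtain ⟨c, d, hcd, hadj, hecd⟩ := hd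
  have hpair := pair_eq (he.symm.trans hecd)
  have := a.isLt; have := b.isLt
  have key : a ≠ b ∧ ¬ PolyAdj m a b := by
    rcases hpair with ⟨rfl, rfl⟩ | ⟨rfl, rfl⟩
    · exact ⟨hcd, hadj⟩
    · exact ⟨hcd.symm, fun h => hadj (polyadj_symm h)⟩
  obtain ⟨hab, hnadj⟩ := key
  have h1 : a.val ≠ b.val := fun h => hab (Fin.ext h)
  have h2 : ¬ ((b.val = a.val + 1 ∨ (a.val = m - 1 ∧ b.val = 0)) ∨
      (a.val = b.val + 1 ∨ (b.val = m - 1 ∧ a.val = 0))) :=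
    fun h => hnadj (polyadj_intro_arith hm h)
  push_neg at h2
  simp only [cycd]
  split_ifs <;> omega

/-- Introduce a crossing from explicit betweenness data. -/
lemma cross_of {a b c d : Fin m} (h1 : CycBtw m a c b) (h2 : CycBtw m b d a) :
    Cross m {a, b} {c, d} := ⟨a, b, c, d, rfl, rfl, h1, h2⟩

/-- Normalized elimination of a crossing with given representatives of `e₁`. -/
lemma cross_norm {e₁ e₂ : Finset (Fin m)} (h : Cross m e₁ e₂) (a b : Fin m)
    (h1 : e₁ = {a, b}) :
    ∃ c d : Fin m, e₂ = {c, d} ∧ CycBtw m a c b ∧ CycBtw m b d a := by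
  obtain ⟨a', b', c', d', ha', hb', hc', hd'⟩ := h
  have hpair := pair_eq (h1.symm.trans ha')
  rcases hpair with ⟨rfl, rfl⟩ | ⟨rfl, rfl⟩
  · exact ⟨c', d', hb', hc', hd'⟩
  · exact ⟨d', c', hb'.trans (Finset.pair_comm _ _), hd', hc'⟩

end Prelims
section Prelims2

variable {m : ℕ}

lemma cross_symm {e₁ e₂ : Finset (Fin m)} (h : Cross m e₁ e₂) : Cross m e₂ e₁ := by
  obtain ⟨a, b, c, d, h1, h2, h3, h4⟩ := h
  refine h2 ▸ h1 ▸ ⟨c, d, b, a, rfl, Finset.pair_comm a b, ?_, ?_⟩ <;>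
  · have := a.isLt; have := b.isLt; have := c.isLt; have := d.isLt
    obtain ⟨p1, p2⟩ := h3; obtain ⟨q1, q2⟩ := h4
    simp only [CycBtw, cycd] at *
    split_ifs at * <;> omega

/-- A polygon edge is never crossed. -/
lemma edge_not_crossed (hm : 3 ≤ m) {u v : Fin m} (huv : PolyAdj m u v)
    {e : Finset (Fin m)} (h : Cross m e {u, v}) : False := by
  obtain ⟨c, d, hcd, h3, h4⟩ := cross_norm (cross_symm h) u v rfl
  have := u.isLt; have := v.isLt; have := c.isLt; have := d.isLt
  have hadj := polyadj_elim huv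
  obtain ⟨p1, p2⟩ := h3; obtain ⟨q1, q2⟩ := h4
  simp only [cycd] at p1 p2 q1 q2
  split_ifs at p1 p2 q1 q2 <;> omega

/-- A diagonal which is a side lies in the triangulation. -/
lemma side_mem (hm : 3 ≤ m) {T : Triangulation m} {x : Finset (Fin m)}
    (hs : IsSide m T x) (hd : IsDiagonal m x) : x ∈ T.diagonals := by
  rcases hs with ⟨a, b, hadj, rfl⟩ | h
  · exfalso
    obtain ⟨c, d, hcd, hnadj, hecd⟩ := hd
    rcases pair_eq hecd with ⟨rfl, rfl⟩ | ⟨rfl, rfl⟩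
    · exact hnadj hadj
    · exact hnadj (polyadj_symm hadj)
  · exact h

/-- Extract convenient data from a diagonal membership. -/
lemma mem_reps {T : Triangulation m} {e : Finset (Fin m)} (h : e ∈ T.diagonals) :
    ∃ a b : Fin m, a ≠ b ∧ ¬ PolyAdj m a b ∧ e = {a, b} := T.isDiagonal e h

/-- Any 2-element subset (given by two distinct points) of a triple is one of
the three pairs. -/
lemma pair_subset_triple {α : Type*} [DecidableEq α] {x y a b c : α}
    (hsub : ({x, y} : Finset α) ⊆ {a, b, c}) :
    ({x, y} : Finset α) = {a, b} ∨ ({x, y} : Finset α) = {a, c} ∨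
    ({x, y} : Finset α) = {b, c} ∨ x = y := by
  by_cases hxy : x = y
  · exact Or.inr (Or.inr (Or.inr hxy))
  have hx : x = a ∨ x = b ∨ x = c := by
    have : x ∈ ({a, b, c} : Finset α) := hsub (by simp); simpa using this
  have hy : y = a ∨ y = b ∨ y = c := by
    have : y ∈ ({a, b, c} : Finset α) := hsub (by simp); simpa using this
  rcases hx with rfl | rfl | rfl <;> rcases hy with rfl | rfl | rfl
  · exact absurd rfl hxy
  · left; rfl
  · right; left; rfl
  · left; exact Finset.pair_comm _ _
  · exact absurd rfl hxy
  · right; right; left; rfl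
  · right; left; exact Finset.pair_comm _ _
  · right; right; left; exact Finset.pair_comm _ _
  · exact absurd rfl hxy

end Prelims2
section Apex

variable {m : ℕ}

lemma cycDist_lt (hm : 0 < m) (a x : Fin m) : cycDist m a x < m := by
  have := a.isLt; have := x.isLt
  simp only [cycd]; split_ifs <;> omega

lemma btw_sub1 {a b c u : Fin m} (h1 : CycBtw m a c b) (h2 : CycBtw m c u b) :
    cycDist m a c < cycDist m a u ∧ cycDist m a u < cycDist m a b := by
  have := a.isLt; have := b.isLt; have := c.isLt; have := u.isLt
  obtain ⟨p1, p2⟩ := h1; obtain ⟨q1, q2⟩ := h2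
  simp only [cycd] at p1 p2 q1 q2 ⊢
  split_ifs at p1 p2 q1 q2 ⊢ <;> omega

lemma btw_sub2 {a b c v : Fin m} (h1 : CycBtw m a c b) (h2 : CycBtw m b v c)
    (hva : v ≠ a) (hnb : ¬ CycBtw m b v a) :
    0 < cycDist m a v ∧ cycDist m a v < cycDist m a c := by
  have := a.isLt; have := b.isLt; have := c.isLt; have := v.isLt
  have hva' : v.val ≠ a.val := fun h => hva (Fin.ext h)
  obtain ⟨p1, p2⟩ := h1; obtain ⟨q1, q2⟩ := h2
  simp only [CycBtw, cycd, not_and, not_lt] at p1 p2 q1 q2 hnb ⊢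
  split_ifs at p1 p2 q1 q2 hnb ⊢ <;> omega

lemma btw_sub3 {a b c u v : Fin m} (h0 : 0 < cycDist m a v)
    (h1 : cycDist m a v < cycDist m a c) (h2 : cycDist m a c < cycDist m a u)
    (h3 : cycDist m a u < cycDist m a b) :
    CycBtw m u a v ∧ CycBtw m v c u := by
  have := a.isLt; have := b.isLt; have := c.isLt; have := u.isLt; have := v.isLt
  simp only [CycBtw, cycd] at h0 h1 h2 h3 ⊢
  split_ifs at h0 h1 h2 h3 ⊢ <;> omega

open Classical in
/-- Apex existence: every diagonal of a triangulation has, on the side from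
`a` to `b`, a vertex `c` such that `{a,c}` and `{c,b}` are sides. -/
lemma apex_exists (hm : 3 ≤ m) (T : Triangulation m) {e : Finset (Fin m)}
    (he : e ∈ T.diagonals) (a b : Fin m) (hab : e = {a, b}) :
    ∃ c, CycBtw m a c b ∧ IsSide m T {a, c} ∧ IsSide m T {c, b} := by
  have hD := diag_dist hm (T.isDiagonal e he) hab
  have ham := a.isLt; have hbm := b.isLt
  -- the candidate set
  set S : Finset (Fin m) :=
    Finset.univ.filter
      (fun c => 0 < cycDist m a c ∧ cycDist m a c < cycDist m a b ∧ IsSide m T {a, c})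
    with hS
  have hSne : S.Nonempty := by
    refine ⟨⟨(a.val + 1) % m, Nat.mod_lt _ (by omega)⟩, ?_⟩
    have hv : ((a.val + 1) % m) = if a.val + 1 < m then a.val + 1 else 0 := by
      split_ifs with h
      · exact Nat.mod_eq_of_lt h
      · have : a.val + 1 = m := by omega
        rw [this, Nat.mod_self]
    simp only [hS, Finset.mem_filter, Finset.mem_univ, true_and]
    refine ⟨?_, ?_, Or.inl ⟨a, _, Or.inl rfl, rfl⟩⟩
    · simp only [cycd]; split_ifs at hv ⊢ <;> omega
    · obtain ⟨hD1, hD2⟩ := hD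
      simp only [cycd] at hD1 hD2 ⊢; split_ifs at hv hD1 hD2 ⊢ <;> omega
  obtain ⟨c, hcS, hcmax⟩ := S.exists_max_image (fun c => cycDist m a c) hSne
  rw [hS, Finset.mem_filter] at hcS
  obtain ⟨-, hc1, hc2, hc3⟩ := hcS
  have hcm := c.isLt
  refine ⟨c, ⟨hc1, hc2⟩, hc3, ?_⟩
  -- show {c, b} is a side
  by_cases hlast : cycDist m a c + 1 = cycDist m a b
  · -- c and b are adjacent
    left
    refine ⟨c, b, ?_, rfl⟩
    left
    rcases Nat.lt_or_ge (c.val + 1) m with h' | h'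
    · rw [Nat.mod_eq_of_lt h']
      simp only [cycd] at hlast hc1 hc2; split_ifs at hlast hc1 hc2 <;> omega
    · have hcm1 : c.val + 1 = m := by omega
      rw [hcm1, Nat.mod_self]
      simp only [cycd] at hlast hc1 hc2; split_ifs at hlast hc1 hc2 <;> omega
  · -- {c, b} is a diagonal not crossing anything in T
    right
    have hdiag : IsDiagonal m {c, b} := by
      refine ⟨c, b, ?_, ?_, rfl⟩
      · intro h; rw [h] at hc2; omega
      · intro hadj
        obtain ⟨hD1, hD2⟩ := hD
        rcases polyadj_elim hadj with h | h <;>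
        · simp only [cycd] at hlast hc1 hc2 hD1 hD2
          split_ifs at hlast hc1 hc2 hD1 hD2 <;> omega
    refine T.maximal _ hdiag ?_
    intro g hg hCross
    obtain ⟨u, v, hguv, hu, hv⟩ := cross_norm hCross c b rfl
    have hu' := btw_sub1 ⟨hc1, hc2⟩ hu
    by_cases hva : v = a
    · -- then {a, u} is a side with larger distance : contradiction with maximality
      subst hva
      have : u ∈ S := by
        rw [hS, Finset.mem_filter]
        exact ⟨Finset.mem_univ _, by omega, hu'.2,
          Or.inr (by rwa [Finset.pair_comm, ← hguv])⟩
      have := hcmax u this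
      omega
    · by_cases hba : CycBtw m b v a
      · -- g crosses e
        refine T.noncross e he g hg ?_
        rw [hab, hguv]
        exact cross_of ⟨by omega, hu'.2⟩ hba
      · -- v is strictly between a and c
        have hv' := btw_sub2 ⟨hc1, hc2⟩ hv hva hba
        -- then g crosses the side {a, c}
        obtain ⟨hx1, hx2⟩ := btw_sub3 hv'.1 hv'.2 hu'.1 hu'.2
        have hcross2 : Cross m {u, v} {a, c} := cross_of hx1 hx2
        rcases hc3 with ⟨a', c', hadj, hac⟩ | hmem
        · exact edge_not_crossed hm hadj (by rw [← hac]; exact hcross2)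
        · exact T.noncross g hg _ hmem (by rw [hguv]; exact hcross2)

end Apex
section Quad

variable {m : ℕ}

lemma btw_ne {a x b : Fin m} (h : CycBtw m a x b) : x ≠ a ∧ x ≠ b := by
  obtain ⟨h1, h2⟩ := h
  constructor
  · rintro rfl
    simp only [cycd] at h1; split_ifs at h1 <;> omega
  · rintro rfl; omega

/-- In any flip, the created diagonal crosses the removed one, both ways. -/
lemma flip_cross {T T' : Triangulation m} {e e' : Finset (Fin m)}
    (h : IsFlip m T T' e e') : Cross m e e' ∧ Cross m e' e := by
  obtain ⟨he, he', hset⟩ := h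
  have hne : e ≠ e' := fun hq => he' (hq ▸ he)
  have he'T' : e' ∈ T'.diagonals := by rw [hset]; exact Finset.mem_insert_self _ _
  have heT' : e ∉ T'.diagonals := by
    rw [hset]
    simp only [Finset.mem_insert, Finset.mem_erase]
    rintro (hq | ⟨hq, -⟩)
    · exact hne hq
    · exact hq rfl
  constructor
  · -- e crosses e' : use maximality of T'
    have hdiag : IsDiagonal m e := T.isDiagonal e he
    have : ¬ ∀ g ∈ T'.diagonals, ¬ Cross m e g := fun hall =>
      heT' (T'.maximal e hdiag hall)
    push_neg at this
    obtain ⟨g, hg, hcr⟩ := this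
    by_cases hge : g = e'
    · exact hge ▸ hcr
    · exfalso
      have hgT : g ∈ T.diagonals := by
        rw [hset] at hg
        rcases Finset.mem_insert.mp hg with hq | hq
        · exact absurd hq hge
        · exact Finset.mem_of_mem_erase hq
      exact T.noncross e he g hgT hcr
  · -- e' crosses e : use maximality of T
    have hdiag : IsDiagonal m e' := T'.isDiagonal e' he'T'
    have : ¬ ∀ g ∈ T.diagonals, ¬ Cross m e' g := fun hall =>
      he' (T.maximal e' hdiag hall)
    push_neg at this
    obtain ⟨g, hg, hcr⟩ := this
    by_cases hge : g = e
    · exact hge ▸ hcr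
    · exfalso
      have hgT' : g ∈ T'.diagonals := by
        rw [hset]
        exact Finset.mem_insert_of_mem (Finset.mem_erase.mpr ⟨hge, hg⟩)
    -- g and e' are both in T', contradiction
      exact T'.noncross g hgT' e' he'T' (cross_symm hcr)

lemma pair_ne_of {a b v : Fin m} (h1 : v ≠ a) (h2 : v ≠ b) :
    ({v, b} : Finset (Fin m)) ≠ {a, b} := by
  intro h
  rcases pair_eq h with ⟨h3, -⟩ | ⟨h3, h4⟩
  · exact h1 h3
  · exact h2 h3

lemma btw_sub4 {a b u w v : Fin m} (hvu : cycDist m a v < cycDist m a u)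
    (hv0 : 0 < cycDist m a v) (hu : CycBtw m a u b) (hw : CycBtw m b w a) :
    CycBtw m v u b ∧ CycBtw m b w v := by
  have := a.isLt; have := b.isLt; have := u.isLt; have := w.isLt; have := v.isLt
  obtain ⟨p1, p2⟩ := hu; obtain ⟨q1, q2⟩ := hw
  simp only [CycBtw, cycd] at *
  split_ifs at * <;> omega

lemma btw_sub5 {a b u w v : Fin m} (huv : cycDist m a u < cycDist m a v)
    (hu0 : 0 < cycDist m a u) (hv : CycBtw m a v b) (hw : CycBtw m b w a) :
    CycBtw m a u v ∧ CycBtw m v w a := by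
  have := a.isLt; have := b.isLt; have := u.isLt; have := w.isLt; have := v.isLt
  obtain ⟨p1, p2⟩ := hv; obtain ⟨q1, q2⟩ := hw
  simp only [CycBtw, cycd] at *
  split_ifs at * <;> omega

/-- Apex uniqueness: any apex of `e` on the side from `a` to `b` must be the
endpoint of the new diagonal `e'` lying on that side. -/
lemma apex_unique (hm : 3 ≤ m) {T T' : Triangulation m} {e e' : Finset (Fin m)}
    (hf : IsFlip m T T' e e') {a b u w v : Fin m} (he : e = {a, b})
    (he' : e' = {u, w}) (hu : CycBtw m a u b) (hw : CycBtw m b w a)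
    (hv : CycBtw m a v b) (hs1 : IsSide m T {a, v}) (hs2 : IsSide m T {v, b}) :
    v = u := by
  by_contra hne
  obtain ⟨heT, he'T, hset⟩ := hf
  have he'T' : e' ∈ T'.diagonals := by rw [hset]; exact Finset.mem_insert_self _ _
  -- e' does not cross any diagonal of T other than e
  have hnc : ∀ g ∈ T.diagonals, g ≠ e → ¬ Cross m g e' := by
    intro g hg hge
    have hgT' : g ∈ T'.diagonals := by
      rw [hset]; exact Finset.mem_insert_of_mem (Finset.mem_erase.mpr ⟨hge, hg⟩)
    exact T'.noncross g hgT' e' he'T'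
  have hvu : cycDist m a v ≠ cycDist m a u := by
    intro h
    apply hne
    have := a.isLt; have := u.isLt; have := v.isLt
    have : v.val = u.val := by
      simp only [cycd] at h; split_ifs at h <;> omega
    exact Fin.ext this
  have hvm := btw_ne hv
  rcases Nat.lt_or_ge (cycDist m a v) (cycDist m a u) with hlt | hge
  · -- v between a and u : {v, b} crosses e'
    obtain ⟨hx1, hx2⟩ := btw_sub4 hlt hv.1 hu hw
    have hcr : Cross m {v, b} {u, w} := cross_of hx1 hx2
    rcases hs2 with ⟨a', b', hadj, heq⟩ | hmem
    · exact edge_not_crossed hm hadj (by rw [← heq]; exact cross_symm (he' ▸ hcr))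
    · exact hnc _ hmem (by rw [he]; exact pair_ne_of hvm.1 hvm.2) (he' ▸ hcr)
  · -- u between a and v : {a, v} crosses e'
    have hlt : cycDist m a u < cycDist m a v := by omega
    obtain ⟨hx1, hx2⟩ := btw_sub5 hlt hu.1 hv hw
    have hcr : Cross m {a, v} {u, w} := cross_of hx1 hx2
    have hneq : ({a, v} : Finset (Fin m)) ≠ {a, b} := by
      intro h
      rcases pair_eq h with ⟨-, h4⟩ | ⟨-, h4⟩
      · exact hvm.2 h4
      · exact hvm.1 h4
    rcases hs1 with ⟨a', b', hadj, heq⟩ | hmem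
    · exact edge_not_crossed hm hadj (by rw [← heq]; exact cross_symm (he' ▸ hcr))
    · exact hnc _ hmem (by rw [he]; exact hneq) (he' ▸ hcr)

end Quad
section QuadMain

variable {m : ℕ}

lemma cycDist_self (a : Fin m) : cycDist m a a = 0 := by
  simp [cycd]

lemma triangle_sides {T : Triangulation m} {t : Finset (Fin m)}
    (ht : IsTriangle m T t) {x y : Fin m} (hx : x ∈ t) (hy : y ∈ t) (hxy : x ≠ y) :
    IsSide m T {x, y} := by
  obtain ⟨a', b', c', h1, h2, h3, rfl, s1, s2, s3⟩ := ht
  simp only [Finset.mem_insert, Finset.mem_singleton] at hx hy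
  rcases hx with rfl | rfl | rfl <;> rcases hy with rfl | rfl | rfl <;>
    first
      | exact absurd rfl hxy
      | exact s1 | exact s2 | exact s3
      | (rw [Finset.pair_comm]; first | exact s1 | exact s2 | exact s3)

/-- The quadrilateral lemma: in a flip removing `e = {a,b}` and creating `e'`,
the new diagonal `e'` joins the apexes `u`, `w` of the two triangles of `T`
containing `e`, and these are the only triangles containing `e`. -/
lemma flip_quad (hm : 3 ≤ m) {T T' : Triangulation m} {e e' : Finset (Fin m)}
    (hf : IsFlip m T T' e e') (a b : Fin m) (he : e = {a, b}) :
    ∃ u w, e' = {u, w} ∧ CycBtw m a u b ∧ CycBtw m b w a ∧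
      IsSide m T {a, u} ∧ IsSide m T {u, b} ∧ IsSide m T {a, w} ∧ IsSide m T {w, b} ∧
      IsTriangle m T {a, b, u} ∧ IsTriangle m T {a, b, w} ∧
      (∀ t, IsTriangle m T t → e ⊆ t → t = {a, b, u} ∨ t = {a, b, w}) := by
  have heT := hf.1
  have hab : a ≠ b := by
    intro h
    have hD := diag_dist hm (T.isDiagonal e heT) he
    rw [h, cycDist_self] at hD
    omega
  obtain ⟨u, w, he', hu, hw⟩ := cross_norm (flip_cross hf).1 a b he
  -- apex on the side from a to b is u
  obtain ⟨c, hc, hs1, hs2⟩ := apex_exists hm T heT a b he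
  have hcu : c = u := apex_unique hm hf he he' hu hw hc hs1 hs2
  rw [hcu] at hs1 hs2
  -- apex on the side from b to a is w
  obtain ⟨c', hc', hs1', hs2'⟩ := apex_exists hm T heT b a (he.trans (Finset.pair_comm a b))
  have hcw : c' = w := by
    refine apex_unique hm hf (he.trans (Finset.pair_comm a b))
      (he'.trans (Finset.pair_comm u w)) hw hu hc' hs1' hs2'
  rw [hcw] at hs1' hs2'
  have hsaw : IsSide m T {a, w} := by rw [Finset.pair_comm]; exact hs2'
  have hswb : IsSide m T {w, b} := by rw [Finset.pair_comm]; exact hs1'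
  have hsideE : IsSide m T {a, b} := Or.inr (by rw [← he]; exact heT)
  have hneu := btw_ne hu
  have hnew := btw_ne hw
  have htri1 : IsTriangle m T {a, b, u} :=
    ⟨a, b, u, hab, hneu.1.symm, hneu.2.symm, rfl, hsideE, hs1,
      by rw [Finset.pair_comm]; exact hs2⟩
  have htri2 : IsTriangle m T {a, b, w} :=
    ⟨a, b, w, hab, hnew.2.symm, hnew.1.symm, rfl, hsideE, hsaw,
      by rw [Finset.pair_comm]; exact hswb⟩
  -- key : any apex is u or w
  have key : ∀ v : Fin m, v ≠ a → v ≠ b → IsSide m T {a, v} → IsSide m T {v, b} →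
      v = u ∨ v = w := by
    intro v hva hvb hs hs'
    rcases cyc_trichot v hva hvb hab with h | h
    · exact Or.inl (apex_unique hm hf he he' hu hw h hs hs')
    · refine Or.inr (apex_unique hm hf (he.trans (Finset.pair_comm a b))
        (he'.trans (Finset.pair_comm u w)) hw hu h ?_ ?_)
      · rw [Finset.pair_comm]; exact hs'
      · rw [Finset.pair_comm]; exact hs
  refine ⟨u, w, he', hu, hw, hs1, hs2, hsaw, hswb, htri1, htri2, ?_⟩
  intro t ht hsub
  have hmem_a : a ∈ t := hsub (by rw [he]; simp)
  have hmem_b : b ∈ t := hsub (by rw [he]; simp)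
  have hcard : t.card = 3 := by
    obtain ⟨a', b', c', h1, h2, h3, hteq, -, -, -⟩ := ht
    exact Finset.card_eq_three.mpr ⟨a', b', c', h1, h2, h3, hteq⟩
  have hne : (t \ {a, b}).Nonempty := by
    rw [Finset.sdiff_nonempty]
    intro hsub'
    have := Finset.card_le_card hsub'
    have h2 : ({a, b} : Finset (Fin m)).card ≤ 2 :=
      le_trans (Finset.card_insert_le _ _) (by simp)
    omega
  obtain ⟨v, hv⟩ := hne
  rw [Finset.mem_sdiff, Finset.mem_insert, Finset.mem_singleton] at hv
  obtain ⟨hvt, hvab⟩ := hv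
  push_neg at hvab
  obtain ⟨hva, hvb⟩ := hvab
  have htv : t = {a, b, v} := by
    have hsub2 : ({a, b, v} : Finset (Fin m)) ⊆ t := by
      intro x hx
      simp only [Finset.mem_insert, Finset.mem_singleton] at hx
      rcases hx with rfl | rfl | rfl <;> assumption
    have hcard2 : ({a, b, v} : Finset (Fin m)).card = 3 :=
      Finset.card_eq_three.mpr ⟨a, b, v, hab, fun h => hva h.symm, fun h => hvb h.symm, rfl⟩
    exact (Finset.eq_of_subset_of_card_le hsub2 (by omega)).symm
  have hsav : IsSide m T {a, v} := triangle_sides ht hmem_a hvt (fun h => hva h.symm)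
  have hsvb : IsSide m T {v, b} := triangle_sides ht hvt hmem_b hvb
  rcases key v hva hvb hsav hsvb with rfl | rfl
  · exact Or.inl htv
  · exact Or.inr htv

end QuadMain
section Transfer

variable {m : ℕ}

lemma third_vertex {T : Triangulation m} {t : Finset (Fin m)} (ht : IsTriangle m T t)
    {x1 x2 : Fin m} (h1 : x1 ∈ t) (h2 : x2 ∈ t) (h12 : x1 ≠ x2) :
    ∃ v, v ≠ x1 ∧ v ≠ x2 ∧ t = {x1, x2, v} := by
  have hcard : t.card = 3 := by
    obtain ⟨a', b', c', ha, hb, hc, hteq, -, -, -⟩ := ht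
    exact Finset.card_eq_three.mpr ⟨a', b', c', ha, hb, hc, hteq⟩
  have hne : (t \ {x1, x2}).Nonempty := by
    rw [Finset.sdiff_nonempty]
    intro hsub'
    have := Finset.card_le_card hsub'
    have h2 : ({x1, x2} : Finset (Fin m)).card ≤ 2 :=
      le_trans (Finset.card_insert_le _ _) (by simp)
    omega
  obtain ⟨v, hv⟩ := hne
  rw [Finset.mem_sdiff, Finset.mem_insert, Finset.mem_singleton] at hv
  obtain ⟨hvt, hvab⟩ := hv
  push_neg at hvab
  refine ⟨v, hvab.1, hvab.2, ?_⟩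
  have hsub2 : ({x1, x2, v} : Finset (Fin m)) ⊆ t := by
    intro x hx
    simp only [Finset.mem_insert, Finset.mem_singleton] at hx
    rcases hx with rfl | rfl | rfl <;> assumption
  have hcard2 : ({x1, x2, v} : Finset (Fin m)).card = 3 :=
    Finset.card_eq_three.mpr ⟨x1, x2, v, h12, fun h => hvab.1 h.symm, fun h => hvab.2 h.symm, rfl⟩
  exact (Finset.eq_of_subset_of_card_le hsub2 (by omega)).symm

/-- The key transfer lemma: if the same flip (removing `e`, creating `e'`) is
performed on two triangulations `T₁` and `T₂`, then the neighbors of `e`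
coincide. -/
lemma neighbor_transfer (hm : 3 ≤ m) {T₁ T₂ T₁' T₂' : Triangulation m}
    {e e' : Finset (Fin m)} (h1 : IsFlip m T₁ T₁' e e') (h2 : IsFlip m T₂ T₂' e e')
    (x : Finset (Fin m)) (hn : Neighbor m T₁ x e) : Neighbor m T₂ x e := by
  obtain ⟨hx1, he1, t, ht, hxt, het⟩ := hn
  obtain ⟨a, b, hab, hnadj, he⟩ := T₁.isDiagonal e h1.1
  obtain ⟨u, w, he'1, hu1, hw1, _, _, _, _, _, _, huniq⟩ := flip_quad hm h1 a b he
  obtain ⟨u₂, w₂, he'2, hu2, hw2, hs1, hs2, hs3, hs4, htriA, htriB, -⟩ := flip_quad hm h2 a b he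
  have huw : u₂ = u ∧ w₂ = w := by
    rcases pair_eq (he'1.symm.trans he'2) with ⟨hq1, hq2⟩ | ⟨hq1, hq2⟩
    · exact ⟨hq1.symm, hq2.symm⟩
    · exfalso; rw [hq1] at hu1; rw [hq2] at hw1
      exact btw_asymm hu2 (hq2 ▸ hw1)
  obtain ⟨rfl, rfl⟩ := huw
  -- x is contained in the canonical triangle
  obtain ⟨x1, x2, hx12, -, hxeq⟩ := T₁.isDiagonal x hx1
  have hxdiag : IsDiagonal m x := T₁.isDiagonal x hx1
  have hmemx : ∀ (c : Fin m), t = {a, b, c} → IsSide m T₂ {a, c} → IsSide m T₂ {c, b} →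
      IsTriangle m T₂ {a, b, c} → Neighbor m T₂ x e := by
    intro c htc hsac hscb htri
    rw [htc] at hxt
    have hxcases := pair_subset_triple (hxeq ▸ hxt)
    have hxmem : x ∈ T₂.diagonals := by
      rcases hxcases with hq | hq | hq | hq
      · rw [hxeq, hq, ← he]; exact h2.1
      · exact side_mem hm (by rw [hxeq, hq]; exact hsac) hxdiag
      · exact side_mem hm (by rw [hxeq, hq, Finset.pair_comm]; exact hscb) hxdiag
      · exact absurd hq hx12
    exact ⟨hxmem, h2.1, {a, b, c}, htri, hxt,
      by rw [he]; intro y hy; simp only [Finset.mem_insert, Finset.mem_singleton] at hy ⊢; tauto⟩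
  rcases huniq t ht het with htc | htc
  · exact hmemx u₂ htc hs1 hs2 htriA
  · exact hmemx w₂ htc hs3 hs4 htriB

/-- Membership persistence along a flip sequence. -/
lemma mem_persist {r : ℕ} {F : ℕ → Finset (Fin m) × Finset (Fin m)}
    {Ts : ℕ → Triangulation m} (hseq : IsFlipSeq m r F Ts)
    {d : Finset (Fin m)} {s t : ℕ} (hst : s ≤ t) (htr : t ≤ r)
    (hd : d ∈ (Ts s).diagonals) (hnr : ∀ k, s ≤ k → k < t → (F k).1 ≠ d) :
    d ∈ (Ts t).diagonals := by
  induction t, hst using Nat.le_induction with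
  | base => exact hd
  | succ n hn ih =>
    have hmem := ih (by omega) (fun k h1 h2 => hnr k h1 (by omega))
    have hflip := hseq n (by omega)
    rw [hflip.2.2]
    exact Finset.mem_insert_of_mem
      (Finset.mem_erase.mpr ⟨fun h => hnr n hn (by omega) h.symm, hmem⟩)

lemma not_mem_persist {r : ℕ} {F : ℕ → Finset (Fin m) × Finset (Fin m)}
    {Ts : ℕ → Triangulation m} (hseq : IsFlipSeq m r F Ts)
    {d : Finset (Fin m)} {s t : ℕ} (hst : s ≤ t) (htr : t ≤ r)
    (hd : d ∉ (Ts s).diagonals) (hnr : ∀ k, s ≤ k → k < t → (F k).2 ≠ d) :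
    d ∉ (Ts t).diagonals := by
  induction t, hst using Nat.le_induction with
  | base => exact hd
  | succ n hn ih =>
    have hmem := ih (by omega) (fun k h1 h2 => hnr k h1 (by omega))
    have hflip := hseq n (by omega)
    rw [hflip.2.2]
    simp only [Finset.mem_insert, Finset.mem_erase]
    rintro (hq | ⟨-, hq⟩)
    · exact hnr n hn (by omega) hq.symm
    · exact hmem hq

lemma side_persist {r : ℕ} {F : ℕ → Finset (Fin m) × Finset (Fin m)}
    {Ts : ℕ → Triangulation m} (hseq : IsFlipSeq m r F Ts)
    {d : Finset (Fin m)} {s t : ℕ} (hst : s ≤ t) (htr : t ≤ r)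
    (hd : IsSide m (Ts s) d) (hnr : ∀ k, s ≤ k → k < t → (F k).1 ≠ d) :
    IsSide m (Ts t) d := by
  rcases hd with h | h
  · exact Or.inl h
  · exact Or.inr (mem_persist hseq hst htr h hnr)

end Transfer
section Propagate

variable {m r : ℕ} {F : ℕ → Finset (Fin m) × Finset (Fin m)} {Ts : ℕ → Triangulation m}
  {σ : Equiv.Perm (Fin r)}

lemma arc_ord (htopo : ∀ p q : Fin r, Arc m r F Ts (σ p).val (σ q).val → p < q)
    {a k : ℕ} (ha : a < r) (hk : k < r) (harc : Arc m r F Ts a k) :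
    σ.symm ⟨a, ha⟩ < σ.symm ⟨k, hk⟩ := by
  have := htopo (σ.symm ⟨a, ha⟩) (σ.symm ⟨k, hk⟩)
  simp only [Equiv.apply_symm_apply] at this
  exact this harc

/-- Any diagonal being flipped is a neighbor of itself. -/
lemma self_neighbor (hm : 3 ≤ m) (hseq : IsFlipSeq m r F Ts) {k : ℕ} (hk : k < r) :
    Neighbor m (Ts k) ((F k).1) ((F k).1) := by
  obtain ⟨a1, b1, hab1, -, he1⟩ := (Ts k).isDiagonal _ ((hseq k hk).1)
  obtain ⟨u, w, -, -, -, -, -, -, -, htriA, -, -⟩ := flip_quad hm (hseq k hk) a1 b1 he1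
  exact ⟨(hseq k hk).1, (hseq k hk).1, {a1, b1, u}, htriA,
    by rw [he1]; intro y hy; simp at hy ⊢; tauto,
    by rw [he1]; intro y hy; simp at hy ⊢; tauto⟩

/-- One step of neighbor propagation: when a side `{c,u}` of a triangle
`{c,c',u}` on the diagonal `x = {c,c'}` is flipped, the newly created diagonal
is again a neighbor of `x`. -/
lemma nb_step (hm : 3 ≤ m) (hseq : IsFlipSeq m r F Ts) {s : ℕ} (hs : s < r)
    {c c' u : Fin m} (hcc' : c ≠ c') (hcu : c ≠ u) (hc'u : c' ≠ u)
    (hx : ({c, c'} : Finset (Fin m)) ∈ (Ts (s+1)).diagonals)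
    (ht : IsTriangle m (Ts s) {c, c', u})
    (hrem : (F s).1 = {c, u}) :
    Neighbor m (Ts (s+1)) ((F s).2) {c, c'} := by
  have hflip := hseq s hs
  obtain ⟨p, p', he'2, hp, hp', hs1, hs2, hs3, hs4, htriA, htriB, huniq⟩ :=
    flip_quad hm hflip c u hrem
  have hnp := btw_ne hp
  have hnp' := btw_ne hp'
  have hpp' : p ≠ p' := by
    intro h
    exact btw_asymm hp (h ▸ hp')
  have hsub : (F s).1 ⊆ ({c, c', u} : Finset (Fin m)) := by
    rw [hrem]; intro y hy; simp at hy ⊢; tauto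
  have hnewmem : (F s).2 ∈ (Ts (s+1)).diagonals := by
    rw [hflip.2.2]; exact Finset.mem_insert_self _ _
  have hxside : IsSide m (Ts (s+1)) {c, c'} := Or.inr hx
  rcases huniq _ ht hsub with hteq | hteq
  · -- c' = p
    have hc'p : c' = p := by
      have : c' ∈ ({c, u, p} : Finset (Fin m)) := hteq ▸ (by simp)
      simp only [Finset.mem_insert, Finset.mem_singleton] at this
      rcases this with h | h | h
      · exact absurd h.symm hcc'
      · exact absurd h hc'u
      · exact h
    have hside2 : IsSide m (Ts (s+1)) {c, p'} := by
      refine side_persist hseq (Nat.le_succ s) hs hs3 ?_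
      intro k' h1 h2 heq
      have : k' = s := by omega
      subst this
      rw [hrem] at heq
      rcases pair_eq heq with ⟨-, h4⟩ | ⟨h3, -⟩
      · exact hnp'.1 h4.symm
      · exact hnp'.2 h3.symm
    have hside3 : IsSide m (Ts (s+1)) {c', p'} := by
      have : (F s).2 = ({c', p'} : Finset (Fin m)) := by rw [he'2, hc'p]
      exact Or.inr (this ▸ hnewmem)
    have htri : IsTriangle m (Ts (s+1)) {c, c', p'} :=
      ⟨c, c', p', hcc', fun h => hnp'.2 h.symm, fun h => hpp' (hc'p.symm.trans h), rfl,
        hxside, hside2, hside3⟩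
    refine ⟨hnewmem, hx, {c, c', p'}, htri, ?_, ?_⟩
    · rw [he'2, hc'p]; intro y hy; simp at hy ⊢; tauto
    · intro y hy; simp at hy ⊢; tauto
  · -- c' = p'
    have hc'p : c' = p' := by
      have : c' ∈ ({c, u, p'} : Finset (Fin m)) := hteq ▸ (by simp)
      simp only [Finset.mem_insert, Finset.mem_singleton] at this
      rcases this with h | h | h
      · exact absurd h.symm hcc'
      · exact absurd h hc'u
      · exact h
    have hside2 : IsSide m (Ts (s+1)) {c, p} := by
      refine side_persist hseq (Nat.le_succ s) hs hs1 ?_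
      intro k' h1 h2 heq
      have : k' = s := by omega
      subst this
      rw [hrem] at heq
      rcases pair_eq heq with ⟨-, h4⟩ | ⟨h3, -⟩
      · exact hnp.2 h4.symm
      · exact hnp.1 h3.symm
    have hside3 : IsSide m (Ts (s+1)) {c', p} := by
      have : (F s).2 = ({c', p} : Finset (Fin m)) := by
        rw [he'2, hc'p]; exact Finset.pair_comm _ _
      exact Or.inr (this ▸ hnewmem)
    have htri : IsTriangle m (Ts (s+1)) {c, c', p} :=
      ⟨c, c', p, hcc', fun h => hnp.1 h.symm, fun h => hpp' (h.symm.trans hc'p), rfl,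
        hxside, hside2, hside3⟩
    refine ⟨hnewmem, hx, {c, c', p}, htri, ?_, ?_⟩
    · rw [he'2, hc'p]; intro y hy; simp at hy ⊢; tauto
    · intro y hy; simp at hy ⊢; tauto

set_option maxHeartbeats 2000000 in
open Classical in
/-- Neighbor propagation: if the diagonal created at time `a` is a neighbor of
`x = (F k).1` just after time `a`, and `x` stays present until being removed at
time `k`, then flip `a` precedes flip `k` in any topological order. -/
lemma claimP1 (hm : 3 ≤ m) (hseq : IsFlipSeq m r F Ts)
    (htopo : ∀ p q : Fin r, Arc m r F Ts (σ p).val (σ q).val → p < q) :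
    ∀ gap a k, ∀ (hak : a < k) (hk : k < r), k - a ≤ gap →
      (∀ s, a < s → s ≤ k → (F k).1 ∈ (Ts s).diagonals) →
      Neighbor m (Ts (a+1)) ((F a).2) ((F k).1) →
      σ.symm ⟨a, by omega⟩ < σ.symm ⟨k, hk⟩ := by
  intro gap
  induction gap with
  | zero => intro a k h1 hk h2 _ _; omega
  | succ gap ih =>
    intro a k hak hk hgap hpres hnb
    by_cases hwx : (F a).2 = (F k).1
    · exact arc_ord htopo _ hk ⟨hak, hk, hwx ▸ self_neighbor hm hseq hk⟩
    obtain ⟨hwmem, hxmem, t, ht, hwt, hxt⟩ := hnb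
    obtain ⟨x1, x2, hx12, -, hxeq⟩ := (Ts (a+1)).isDiagonal _ hxmem
    have hx1t : x1 ∈ t := hxt (by rw [hxeq]; simp)
    have hx2t : x2 ∈ t := hxt (by rw [hxeq]; simp)
    obtain ⟨u, hux1, hux2, hteq⟩ := third_vertex ht hx1t hx2t hx12
    obtain ⟨w1, w2, hw12, -, hweq⟩ := (Ts (a+1)).isDiagonal _ hwmem
    have hwsub : ({w1, w2} : Finset (Fin m)) ⊆ {x1, x2, u} := by
      rw [← hweq, ← hteq]; exact hwt
    have hwx' : (F a).2 = {x1, u} ∨ (F a).2 = {x2, u} := by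
      rcases pair_subset_triple hwsub with hq | hq | hq | hq
      · exact absurd (hweq.trans (hq.trans hxeq.symm)) hwx
      · exact Or.inl (hweq.trans hq)
      · exact Or.inr (hweq.trans hq)
      · exact absurd hq hw12
    by_cases hex : ∃ s, a < s ∧ s ≤ k ∧ ((F s).1 = {x1, u} ∨ (F s).1 = {x2, u})
    · -- a protected side is removed at time s₀
      have hfind : ∃ s₀, (a < s₀ ∧ s₀ ≤ k ∧ ((F s₀).1 = {x1, u} ∨ (F s₀).1 = {x2, u})) ∧
          ∀ s' < s₀, ¬ (a < s' ∧ s' ≤ k ∧ ((F s').1 = {x1, u} ∨ (F s').1 = {x2, u})) :=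
        ⟨Nat.find hex, Nat.find_spec hex, fun s' h => Nat.find_min hex h⟩
      obtain ⟨s₀, ⟨has₀, hs₀k, hrem⟩, hmin⟩ := hfind
      have hs₀ltk : s₀ < k := by
        rcases Nat.lt_or_ge s₀ k with h | h
        · exact h
        · exfalso
          have hs₀eq : s₀ = k := by omega
          rw [hs₀eq] at hrem
          rcases hrem with hq | hq
          · rcases pair_eq (hxeq.symm.trans hq) with ⟨-, h4⟩ | ⟨-, h4⟩
            · exact hux2 h4.symm
            · exact hx12 h4.symm
          · rcases pair_eq (hxeq.symm.trans hq) with ⟨h3, -⟩ | ⟨h3, -⟩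
            · exact hx12 h3
            · exact hux1 h3.symm
      have hs₀r : s₀ < r := by omega
      have hnr1 : ∀ k', a + 1 ≤ k' → k' < s₀ → (F k').1 ≠ ({x1, u} : Finset (Fin m)) :=
        fun k' h1 h2 heq => hmin k' h2 ⟨by omega, by omega, Or.inl heq⟩
      have hnr2 : ∀ k', a + 1 ≤ k' → k' < s₀ → (F k').1 ≠ ({x2, u} : Finset (Fin m)) :=
        fun k' h1 h2 heq => hmin k' h2 ⟨by omega, by omega, Or.inr heq⟩
      have hsideA : IsSide m (Ts (a+1)) {x1, u} :=
        triangle_sides ht hx1t (by rw [hteq]; simp) (fun h => hux1 h.symm)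
      have hsideB : IsSide m (Ts (a+1)) {x2, u} :=
        triangle_sides ht hx2t (by rw [hteq]; simp) (fun h => hux2 h.symm)
      have hsideA_s : IsSide m (Ts s₀) {x1, u} :=
        side_persist hseq (by omega) (by omega) hsideA hnr1
      have hsideB_s : IsSide m (Ts s₀) {x2, u} :=
        side_persist hseq (by omega) (by omega) hsideB hnr2
      have hxmem_s : (F k).1 ∈ (Ts s₀).diagonals := hpres s₀ (by omega) (by omega)
      have hwmem_s : (F a).2 ∈ (Ts s₀).diagonals := by
        refine mem_persist hseq (show a+1 ≤ s₀ by omega) (by omega) hwmem ?_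
        intro k' h1 h2 heq
        rcases hwx' with hq | hq
        · exact hnr1 k' h1 h2 (heq.trans hq)
        · exact hnr2 k' h1 h2 (heq.trans hq)
      have htri_s : IsTriangle m (Ts s₀) t := by
        rw [hteq]
        exact ⟨x1, x2, u, hx12, fun h => hux1 h.symm, fun h => hux2 h.symm, rfl,
          Or.inr (by rw [← hxeq]; exact hxmem_s), hsideA_s, hsideB_s⟩
      have harc1 : σ.symm ⟨a, by omega⟩ < σ.symm ⟨s₀, hs₀r⟩ := by
        refine arc_ord htopo _ hs₀r ⟨has₀, hs₀r, hwmem_s, (hseq s₀ hs₀r).1, t, htri_s, hwt, ?_⟩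
        rcases hrem with hq | hq <;>
          · rw [hq, hteq]; intro y hy; simp at hy ⊢; tauto
      have hxmem_s1 : (F k).1 ∈ (Ts (s₀+1)).diagonals := hpres (s₀+1) (by omega) (by omega)
      have hnb' : Neighbor m (Ts (s₀+1)) ((F s₀).2) ((F k).1) := by
        rcases hrem with hq | hq
        · have := nb_step (c := x1) (c' := x2) (u := u) hm hseq hs₀r hx12
            (fun h => hux1 h.symm) (fun h => hux2 h.symm)
            (by rw [← hxeq]; exact hxmem_s1) (by rw [← hteq]; exact htri_s) hq
          rwa [← hxeq] at this
        · have hxeq' : (F k).1 = ({x2, x1} : Finset (Fin m)) :=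
            hxeq.trans (Finset.pair_comm _ _)
          have hteq' : t = ({x2, x1, u} : Finset (Fin m)) := by
            rw [hteq]; ext y; simp; tauto
          have := nb_step (c := x2) (c' := x1) (u := u) hm hseq hs₀r
            (fun h => hx12 h.symm) (fun h => hux2 h.symm)
            (fun h => hux1 h.symm) (by rw [← hxeq']; exact hxmem_s1)
            (by rw [← hteq']; exact htri_s) hq
          rwa [← hxeq'] at this
      have := ih s₀ k hs₀ltk hk (by omega) (fun s h1 h2 => hpres s (by omega) h2) hnb'
      exact lt_trans harc1 this
    · -- no protected side is ever removed : direct arc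
      push_neg at hex
      have hsideA : IsSide m (Ts (a+1)) {x1, u} :=
        triangle_sides ht hx1t (by rw [hteq]; simp) (fun h => hux1 h.symm)
      have hsideB : IsSide m (Ts (a+1)) {x2, u} :=
        triangle_sides ht hx2t (by rw [hteq]; simp) (fun h => hux2 h.symm)
      have hsideA_k : IsSide m (Ts k) {x1, u} :=
        side_persist hseq (by omega) (by omega) hsideA
          (fun k' h1 h2 => (hex k' (by omega) (by omega)).1)
      have hsideB_k : IsSide m (Ts k) {x2, u} :=
        side_persist hseq (by omega) (by omega) hsideB
          (fun k' h1 h2 => (hex k' (by omega) (by omega)).2)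
      have hwmem_k : (F a).2 ∈ (Ts k).diagonals := by
        refine mem_persist hseq (show a+1 ≤ k by omega) (by omega) hwmem ?_
        intro k' h1 h2 heq
        rcases hwx' with hq | hq
        · exact (hex k' (by omega) (by omega)).1 (heq.trans hq)
        · exact (hex k' (by omega) (by omega)).2 (heq.trans hq)
      have htri_k : IsTriangle m (Ts k) t := by
        rw [hteq]
        exact ⟨x1, x2, u, hx12, fun h => hux1 h.symm, fun h => hux2 h.symm, rfl,
          Or.inr (by rw [← hxeq]; exact hpres k (by omega) le_rfl), hsideA_k, hsideB_k⟩
      exact arc_ord htopo _ hk ⟨hak, hk, hwmem_k, (hseq k hk).1, t, htri_k, hwt, hxt⟩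

end Propagate
section CrossProp

variable {m r : ℕ} {F : ℕ → Finset (Fin m) × Finset (Fin m)} {Ts : ℕ → Triangulation m}
  {σ : Equiv.Perm (Fin r)}

lemma cycBtw_iff_lt (a x b : Fin m) : CycBtw m a x b ↔
    ((a.val < x.val ∧ x.val < b.val) ∨ (x.val < b.val ∧ b.val < a.val) ∨
      (b.val < a.val ∧ a.val < x.val)) := by
  have := a.isLt; have := x.isLt; have := b.isLt
  simp only [CycBtw, cycd]; split_ifs <;> omega

lemma cross_right_comm {X : Finset (Fin m)} {c d : Fin m} (h : Cross m X {c, d}) :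
    Cross m X {d, c} := by rwa [Finset.pair_comm c d] at h

set_option maxHeartbeats 4000000 in
/-- The quadrilateral side crossing lemma: a chord crossing the diagonal of a
quadrilateral either is the other diagonal, crosses it, or crosses one of the
four sides. -/
lemma quad_side_cross {d₁ d₂ p p' e₁ e₂ : Fin m}
    (hp : CycBtw m d₁ p d₂) (hp' : CycBtw m d₂ p' d₁)
    (he1 : CycBtw m d₁ e₁ d₂) (he2 : CycBtw m d₂ e₂ d₁) :
    (e₁ = p ∧ e₂ = p') ∨ Cross m {e₁, e₂} {p, p'} ∨
    (Cross m {e₁, e₂} {d₁, p} ∨ Cross m {e₁, e₂} {p, d₂} ∨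
     Cross m {e₁, e₂} {d₂, p'} ∨ Cross m {e₁, e₂} {p', d₁}) := by
  have h1 := (cycBtw_iff_lt _ _ _).mp hp
  have h2 := (cycBtw_iff_lt _ _ _).mp hp'
  have h3 := (cycBtw_iff_lt _ _ _).mp he1
  have h4 := (cycBtw_iff_lt _ _ _).mp he2
  by_cases hA : CycBtw m d₁ e₁ p
  · have hA' := (cycBtw_iff_lt _ _ _).mp hA
    by_cases hC : CycBtw m d₂ e₂ p'
    · -- e₁ ∈ (d₁,p), e₂ ∈ (d₂,p') : cross {p, d₁} → {d₁, p}
      have hC' := (cycBtw_iff_lt _ _ _).mp hC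
      refine Or.inr (Or.inr (Or.inl (cross_right_comm
        (cross_of ?_ ?_)))) <;> (rw [cycBtw_iff_lt]; omega)
    by_cases hD : CycBtw m p' e₂ d₁
    · -- e₁ ∈ (d₁,p), e₂ ∈ (p',d₁) : cross {p', d₁}
      have hD' := (cycBtw_iff_lt _ _ _).mp hD
      refine Or.inr (Or.inr (Or.inr (Or.inr (Or.inr
        (cross_of ?_ ?_))))) <;> (rw [cycBtw_iff_lt]; omega)
    · -- e₂ = p' : cross {p, d₁} → {d₁, p}
      rw [cycBtw_iff_lt] at hC hD
      have he2p : e₂ = p' := Fin.ext (by omega)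
      subst he2p
      refine Or.inr (Or.inr (Or.inl (cross_right_comm
        (cross_of ?_ ?_)))) <;> (rw [cycBtw_iff_lt]; omega)
  by_cases hB : CycBtw m p e₁ d₂
  · have hB' := (cycBtw_iff_lt _ _ _).mp hB
    by_cases hC : CycBtw m d₂ e₂ p'
    · -- e₁ ∈ (p,d₂), e₂ ∈ (d₂,p') : cross {d₂, p'}
      have hC' := (cycBtw_iff_lt _ _ _).mp hC
      refine Or.inr (Or.inr (Or.inr (Or.inr (Or.inl
        (cross_of ?_ ?_))))) <;> (rw [cycBtw_iff_lt]; omega)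
    by_cases hD : CycBtw m p' e₂ d₁
    · -- e₁ ∈ (p,d₂), e₂ ∈ (p',d₁) : cross {p', p} → {p, p'}
      have hD' := (cycBtw_iff_lt _ _ _).mp hD
      refine Or.inr (Or.inl (cross_right_comm (cross_of ?_ ?_))) <;>
        (rw [cycBtw_iff_lt]; omega)
    · -- e₂ = p' : cross {d₂, p} → {p, d₂}
      rw [cycBtw_iff_lt] at hC hD
      have he2p : e₂ = p' := Fin.ext (by omega)
      subst he2p
      refine Or.inr (Or.inr (Or.inr (Or.inl (cross_right_comm
        (cross_of ?_ ?_))))) <;> (rw [cycBtw_iff_lt]; omega)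
  · -- e₁ = p
    rw [cycBtw_iff_lt] at hA hB
    have he1p : e₁ = p := Fin.ext (by omega)
    subst he1p
    by_cases hC : CycBtw m d₂ e₂ p'
    · -- cross {d₂, p'}
      have hC' := (cycBtw_iff_lt _ _ _).mp hC
      refine Or.inr (Or.inr (Or.inr (Or.inr (Or.inl
        (cross_of ?_ ?_))))) <;> (rw [cycBtw_iff_lt]; omega)
    by_cases hD : CycBtw m p' e₂ d₁
    · -- cross {p', d₁}
      have hD' := (cycBtw_iff_lt _ _ _).mp hD
      refine Or.inr (Or.inr (Or.inr (Or.inr (Or.inr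
        (cross_of ?_ ?_))))) <;> (rw [cycBtw_iff_lt]; omega)
    · rw [cycBtw_iff_lt] at hC hD
      exact Or.inl ⟨rfl, Fin.ext (by omega)⟩

lemma nb_of_sides (hseq : IsFlipSeq m r F Ts) {s : ℕ} (hs : s < r) {α β γ : Fin m}
    (hab : α ≠ β) (hag : α ≠ γ) (hbg : β ≠ γ)
    (hw : ({α, β} : Finset (Fin m)) ∈ (Ts (s+1)).diagonals)
    (h2 : IsSide m (Ts (s+1)) {α, γ})
    (hnew : (F s).2 = {β, γ}) :
    Neighbor m (Ts (s+1)) ((F s).2) {α, β} := by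
  have hmemnew : (F s).2 ∈ (Ts (s+1)).diagonals := by
    rw [(hseq s hs).2.2]; exact Finset.mem_insert_self _ _
  refine ⟨hmemnew, hw, {α, β, γ},
    ⟨α, β, γ, hab, hag, hbg, rfl, Or.inr hw, h2, Or.inr (hnew ▸ hmemnew)⟩, ?_, ?_⟩
  · rw [hnew]; intro y hy; simp at hy ⊢; tauto
  · intro y hy; simp at hy ⊢; tauto

end CrossProp
section CrossQ

variable {m r : ℕ} {F : ℕ → Finset (Fin m) × Finset (Fin m)} {Ts : ℕ → Triangulation m}
  {σ : Equiv.Perm (Fin r)}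

open Classical in
/-- When the flip at time `s` removes a diagonal crossing the diagonal
`(F i).2` (which will be created at time `i` and is absent meanwhile), there is
a later flip, ordered after `s` in every topological order, which either is
flip `i` itself or again removes a diagonal crossing `(F i).2`. -/
lemma cross_quadside (hm : 3 ≤ m) (hseq : IsFlipSeq m r F Ts)
    (htopo : ∀ p q : Fin r, Arc m r F Ts (σ p).val (σ q).val → p < q)
    {s i : ℕ} (hsi : s < i) (hi : i < r)
    (habs : ∀ k, s < k → k ≤ i → (F i).2 ∉ (Ts k).diagonals)
    (hcrB : Cross m ((F s).1) ((F i).2))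
    (hnA : ¬ Cross m ((F s).2) ((F i).2))
    (hne2 : (F s).2 ≠ (F i).2) :
    ∃ kw, ∃ _ : s < kw, ∃ _ : kw ≤ i,
      σ.symm ⟨s, by omega⟩ < σ.symm ⟨kw, by omega⟩ ∧
      (kw = i ∨ Cross m ((F kw).1) ((F i).2)) := by
  have hs' : s < r := by omega
  have hflip := hseq s hs'
  obtain ⟨d₁, d₂, hd12, -, hdeq⟩ := (Ts s).isDiagonal _ hflip.1
  obtain ⟨p, p', hpeq, hp, hp', hsd1, hsd2, hsd3, hsd4, -, -, -⟩ := flip_quad hm hflip d₁ d₂ hdeq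
  obtain ⟨e₁, e₂, heeq, hbe1, hbe2⟩ := cross_norm hcrB d₁ d₂ hdeq
  have hnp := btw_ne hp
  have hnp' := btw_ne hp'
  have hpp' : p ≠ p' := fun h => btw_asymm hp (h ▸ hp')
  -- common closing argument
  have finish : ∀ w : Finset (Fin m), w ∈ (Ts (s+1)).diagonals →
      Cross m ((F i).2) w → Neighbor m (Ts (s+1)) ((F s).2) w →
      ∃ kw, ∃ _ : s < kw, ∃ _ : kw ≤ i,
        σ.symm ⟨s, by omega⟩ < σ.symm ⟨kw, by omega⟩ ∧
        (kw = i ∨ Cross m ((F kw).1) ((F i).2)) := by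
    intro w hwmem hcross hnb
    by_cases hex : ∃ k, s < k ∧ k ≤ i ∧ (F k).1 = w
    · have hfind : ∃ kw, (s < kw ∧ kw ≤ i ∧ (F kw).1 = w) ∧
          ∀ k' < kw, ¬ (s < k' ∧ k' ≤ i ∧ (F k').1 = w) :=
        ⟨Nat.find hex, Nat.find_spec hex, fun _ h => Nat.find_min hex h⟩
      obtain ⟨kw, ⟨hkw1, hkw2, hkw3⟩, hmin⟩ := hfind
      have hkwr : kw < r := by omega
      have hpres : ∀ s', s < s' → s' ≤ kw → (F kw).1 ∈ (Ts s').diagonals := by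
        intro s' hs1 hs2
        rw [hkw3]
        exact mem_persist hseq (show s+1 ≤ s' by omega) (by omega) hwmem
          (fun k' h1 h2 heq => hmin k' (by omega) ⟨by omega, by omega, heq⟩)
      have hnb' : Neighbor m (Ts (s+1)) ((F s).2) ((F kw).1) := by rw [hkw3]; exact hnb
      have hord := claimP1 hm hseq htopo (kw - s) s kw hkw1 hkwr le_rfl hpres hnb'
      refine ⟨kw, hkw1, hkw2, hord, ?_⟩
      by_cases hkwi : kw = i
      · exact Or.inl hkwi
      · exact Or.inr (by rw [hkw3]; exact cross_symm hcross)
    · exfalso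
      push_neg at hex
      have hwmem_i : w ∈ (Ts (i+1)).diagonals :=
        mem_persist hseq (show s+1 ≤ i+1 by omega) (by omega) hwmem
          (fun k' h1 h2 heq => hex k' (by omega) (by omega) heq)
      have he_mem : (F i).2 ∈ (Ts (i+1)).diagonals := by
        rw [(hseq i hi).2.2]; exact Finset.mem_insert_self _ _
      exact absurd hcross ((Ts (i+1)).noncross _ he_mem _ hwmem_i)
  -- membership upgrading for sides that are crossed
  have prep : ∀ w : Finset (Fin m), IsSide m (Ts s) w → w ≠ (F s).1 →
      Cross m ((F i).2) w → w ∈ (Ts (s+1)).diagonals := by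
    intro w hside hne hcr
    have hwdiag : w ∈ (Ts s).diagonals := by
      rcases hside with ⟨α, β, hadj, heq2⟩ | hmem2
      · exact absurd (show Cross m ((F i).2) {α, β} by rw [← heq2]; exact hcr)
          (fun hcc => edge_not_crossed hm hadj hcc)
      · exact hmem2
    rw [hflip.2.2]
    exact Finset.mem_insert_of_mem (Finset.mem_erase.mpr ⟨hne, hwdiag⟩)
  have persist3 : ∀ w : Finset (Fin m), IsSide m (Ts s) w → w ≠ (F s).1 →
      IsSide m (Ts (s+1)) w := by
    intro w hside hne
    refine side_persist hseq (Nat.le_succ s) (by omega) hside ?_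
    intro k' h1 h2
    have : k' = s := by omega
    subst this; exact fun h => hne h.symm
  -- the four sides are distinct from the removed diagonal
  have hne1 : ({d₁, p} : Finset (Fin m)) ≠ (F s).1 := by
    rw [hdeq]; intro h
    rcases pair_eq h with ⟨-, h4⟩ | ⟨h3, -⟩
    · exact hnp.2 h4
    · exact hd12 h3
  have hne2' : ({d₂, p} : Finset (Fin m)) ≠ (F s).1 := by
    rw [hdeq]; intro h
    rcases pair_eq h with ⟨h3, -⟩ | ⟨-, h4⟩
    · exact hd12 h3.symm
    · exact hnp.1 h4
  have hne3 : ({d₁, p'} : Finset (Fin m)) ≠ (F s).1 := by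
    rw [hdeq]; intro h
    rcases pair_eq h with ⟨-, h4⟩ | ⟨h3, -⟩
    · exact hnp'.1 h4
    · exact hd12 h3
  have hne4 : ({d₂, p'} : Finset (Fin m)) ≠ (F s).1 := by
    rw [hdeq]; intro h
    rcases pair_eq h with ⟨h3, -⟩ | ⟨-, h4⟩
    · exact hd12 h3.symm
    · exact hnp'.2 h4
  rcases quad_side_cross hp hp' hbe1 hbe2 with ⟨hq1, hq2⟩ | hq | hq | hq | hq | hq
  · -- e = (F s).2 : contradiction
    exfalso
    exact hne2 (hpeq.trans (by rw [hq1, hq2] at heeq; exact heeq.symm))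
  · -- e crosses (F s).2 : contradiction
    exfalso
    apply hnA
    apply cross_symm
    rw [heeq, hpeq]; exact hq
  · -- w = {d₁, p}
    have hcross : Cross m ((F i).2) {d₁, p} := by rw [heeq]; exact hq
    have hwmem1 := prep _ hsd1 hne1 hcross
    have hside3 := persist3 _ hsd3 hne3
    exact finish {d₁, p} hwmem1 hcross
      (nb_of_sides hseq hs' (fun h => hnp.1 h.symm) (fun h => hnp'.2 h.symm) hpp'
        hwmem1 hside3 hpeq)
  · -- w = {p, d₂} : use it as {d₂, p}
    have hcross : Cross m ((F i).2) {d₂, p} := cross_right_comm (by rw [heeq]; exact hq)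
    have hsd2' : IsSide m (Ts s) {d₂, p} := by rw [Finset.pair_comm]; exact hsd2
    have hsd4' : IsSide m (Ts s) {d₂, p'} := by rw [Finset.pair_comm]; exact hsd4
    have hwmem1 := prep _ hsd2' hne2' hcross
    have hside3 := persist3 _ hsd4' hne4
    exact finish {d₂, p} hwmem1 hcross
      (nb_of_sides hseq hs' (fun h => hnp.2 h.symm) (fun h => hnp'.1 h.symm) hpp'
        hwmem1 hside3 hpeq)
  · -- w = {d₂, p'}
    have hcross : Cross m ((F i).2) {d₂, p'} := by rw [heeq]; exact hq
    have hsd4' : IsSide m (Ts s) {d₂, p'} := by rw [Finset.pair_comm]; exact hsd4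
    have hsd2' : IsSide m (Ts s) {d₂, p} := by rw [Finset.pair_comm]; exact hsd2
    have hwmem1 := prep _ hsd4' hne4 hcross
    have hside3 := persist3 _ hsd2' hne2'
    exact finish {d₂, p'} hwmem1 hcross
      (nb_of_sides hseq hs' (fun h => hnp'.1 h.symm) (fun h => hnp.2 h.symm)
        (fun h => hpp' h.symm) hwmem1 hside3
        (hpeq.trans (Finset.pair_comm p p')))
  · -- w = {p', d₁} : use it as {d₁, p'}
    have hcross : Cross m ((F i).2) {d₁, p'} := cross_right_comm (by rw [heeq]; exact hq)
    have hwmem1 := prep _ hsd3 hne3 hcross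
    have hside3 := persist3 _ hsd1 hne1
    exact finish {d₁, p'} hwmem1 hcross
      (nb_of_sides hseq hs' (fun h => hnp'.2 h.symm) (fun h => hnp.1 h.symm)
        (fun h => hpp' h.symm) hwmem1 hside3
        (hpeq.trans (Finset.pair_comm p p')))

end CrossQ
section ClaimQ

variable {m r : ℕ} {F : ℕ → Finset (Fin m) × Finset (Fin m)} {Ts : ℕ → Triangulation m}
  {σ : Equiv.Perm (Fin r)}

open Classical in
/-- If the flip at time `a` removes or creates a diagonal crossing the
diagonal created at time `i > a`, which is absent in between, then flip `a`
precedes flip `i` in every topological order. -/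
lemma claimQ (hm : 3 ≤ m) (hseq : IsFlipSeq m r F Ts)
    (htopo : ∀ p q : Fin r, Arc m r F Ts (σ p).val (σ q).val → p < q) :
    ∀ gap a i, ∀ (hai : a < i) (hi : i < r), i - a ≤ gap →
      (∀ k, a < k → k ≤ i → (F i).2 ∉ (Ts k).diagonals) →
      (Cross m ((F a).2) ((F i).2) ∨ Cross m ((F a).1) ((F i).2)) →
      σ.symm ⟨a, by omega⟩ < σ.symm ⟨i, hi⟩ := by
  intro gap
  induction gap with
  | zero => intro a i hai hi hgap _ _; omega
  | succ gap ih =>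
    intro a i hai hi hgap habs hcr
    have ha' : a < r := by omega
    have hnd : (F a).2 ≠ (F i).2 := by
      intro h
      apply habs (a+1) (by omega) (by omega)
      rw [← h, (hseq a ha').2.2]
      exact Finset.mem_insert_self _ _
    by_cases hA : Cross m ((F a).2) ((F i).2)
    · -- mode A : the created diagonal crosses e, follow it to its removal
      by_cases hex : ∃ k, a < k ∧ k ≤ i ∧ (F k).1 = (F a).2
      · have hfind : ∃ kw, (a < kw ∧ kw ≤ i ∧ (F kw).1 = (F a).2) ∧
            ∀ k' < kw, ¬ (a < k' ∧ k' ≤ i ∧ (F k').1 = (F a).2) :=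
          ⟨Nat.find hex, Nat.find_spec hex, fun _ h => Nat.find_min hex h⟩
        obtain ⟨kw, ⟨hkw1, hkw2, hkw3⟩, hmin⟩ := hfind
        have hkwr : kw < r := by omega
        have harc1 : σ.symm ⟨a, ha'⟩ < σ.symm ⟨kw, hkwr⟩ := by
          refine arc_ord htopo _ hkwr ⟨hkw1, hkwr, ?_⟩
          rw [← hkw3]
          exact self_neighbor hm hseq hkwr
        by_cases hkwi : kw = i
        · subst hkwi; exact harc1
        · have hkwlt : kw < i := by omega
          by_cases hc2 : Cross m ((F kw).2) ((F i).2)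
          · exact lt_trans harc1 (ih kw i hkwlt hi (by omega)
              (fun k h1 h2 => habs k (by omega) h2) (Or.inl hc2))
          · have hnd2 : (F kw).2 ≠ (F i).2 := by
              intro h
              apply habs (kw+1) (by omega) (by omega)
              rw [← h, (hseq kw hkwr).2.2]
              exact Finset.mem_insert_self _ _
            have hcrB : Cross m ((F kw).1) ((F i).2) := by rw [hkw3]; exact hA
            obtain ⟨kw2, h1, h2, hord, hlast⟩ :=
              cross_quadside hm hseq htopo hkwlt hi
                (fun k hk1 hk2 => habs k (by omega) hk2) hcrB hc2 hnd2
            by_cases hkw2i : kw2 = i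
            · subst hkw2i; exact lt_trans harc1 hord
            · have hcc := hlast.resolve_left hkw2i
              have hkw2lt : kw2 < i := by omega
              have hkw2a : kw < kw2 := h1
              exact lt_trans harc1 (lt_trans hord (ih kw2 i hkw2lt hi (by omega)
                (fun k hk1 hk2 => habs k (by omega) hk2) (Or.inr hcc)))
      · exfalso
        push_neg at hex
        have hmem_i : (F a).2 ∈ (Ts (i+1)).diagonals := by
          refine mem_persist hseq (show a+1 ≤ i+1 by omega) (by omega) ?_ ?_
          · rw [(hseq a ha').2.2]; exact Finset.mem_insert_self _ _
          · exact fun k' h1 h2 heq => hex k' (by omega) (by omega) heq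
        have he_mem : (F i).2 ∈ (Ts (i+1)).diagonals := by
          rw [(hseq i hi).2.2]; exact Finset.mem_insert_self _ _
        exact (Ts (i+1)).noncross _ hmem_i _ he_mem hA
    · -- mode B : the removed diagonal crosses e
      have hB := hcr.resolve_left hA
      obtain ⟨kw, h1, h2, hord, hlast⟩ :=
        cross_quadside hm hseq htopo hai hi habs hB hA hnd
      by_cases hkwi : kw = i
      · subst hkwi; exact hord
      · have hcc := hlast.resolve_left hkwi
        have hkwlt : kw < i := by omega
        have hkwa : a < kw := h1
        exact lt_trans hord (ih kw i hkwlt hi (by omega)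
          (fun k hk1 hk2 => habs k (by omega) hk2) (Or.inr hcc))

end ClaimQ
section Events

variable {m r : ℕ} {F : ℕ → Finset (Fin m) × Finset (Fin m)} {Ts : ℕ → Triangulation m}
  {σ : Equiv.Perm (Fin r)}

open Classical in
/-- Events (removals or creations) on a fixed diagonal `d` appear in the same
relative order in every topological order. -/
lemma event_ord (hm : 3 ≤ m) (hseq : IsFlipSeq m r F Ts)
    (htopo : ∀ p q : Fin r, Arc m r F Ts (σ p).val (σ q).val → p < q)
    {d : Finset (Fin m)} :
    ∀ gap t t', ∀ (htt : t < t') (ht'r : t' < r), t' - t ≤ gap →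
      ((F t).1 = d ∨ (F t).2 = d) → ((F t').1 = d ∨ (F t').2 = d) →
      σ.symm ⟨t, by omega⟩ < σ.symm ⟨t', ht'r⟩ := by
  intro gap
  induction gap with
  | zero => intro t t' h1 h2 h3 _ _; omega
  | succ gap ih =>
    intro t t' htt ht'r hgap hev hev'
    have htr : t < r := by omega
    have hex : ∃ k, t < k ∧ k ≤ t' ∧ ((F k).1 = d ∨ (F k).2 = d) := ⟨t', htt, le_rfl, hev'⟩
    have hfind : ∃ k, (t < k ∧ k ≤ t' ∧ ((F k).1 = d ∨ (F k).2 = d)) ∧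
        ∀ k' < k, ¬ (t < k' ∧ k' ≤ t' ∧ ((F k').1 = d ∨ (F k').2 = d)) :=
      ⟨Nat.find hex, Nat.find_spec hex, fun _ h => Nat.find_min hex h⟩
    obtain ⟨k, ⟨hk1, hk2, hk3⟩, hmin⟩ := hfind
    have hkr : k < r := by omega
    have hstep : σ.symm ⟨t, htr⟩ < σ.symm ⟨k, hkr⟩ := by
      rcases hev with hrem | hcre
      · -- t removes d ; k must create d ; use claimQ
        have habs : ∀ s, t < s → s ≤ k → d ∉ (Ts s).diagonals := by
          intro s h1 h2
          have hbase : d ∉ (Ts (t+1)).diagonals := by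
            rw [(hseq t htr).2.2]
            simp only [Finset.mem_insert, Finset.mem_erase]
            rintro (hq | ⟨hq, hq2⟩)
            · exact (hseq t htr).2.1 (hq ▸ hrem ▸ (hseq t htr).1)
            · exact hq (hrem.symm ▸ rfl)
          exact not_mem_persist hseq (show t+1 ≤ s by omega) (by omega) hbase
            (fun k' hh1 hh2 heq => hmin k' (by omega) ⟨by omega, by omega, Or.inr heq⟩)
        have hcre' : (F k).2 = d := by
          rcases hk3 with h | h
          · exact absurd (h ▸ (hseq k hkr).1) (habs k hk1 le_rfl)
          · exact h
        have := claimQ hm hseq htopo (k - t) t k hk1 hkr le_rfl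
          (fun k' h1 h2 => by rw [hcre']; exact habs k' h1 h2)
          (Or.inl (by rw [hcre', ← hrem]; exact (flip_cross (hseq t htr)).2))
        exact this
      · -- t creates d ; k must remove d ; direct arc
        have hpres : ∀ s, t < s → s ≤ k → d ∈ (Ts s).diagonals := by
          intro s h1 h2
          have hbase : d ∈ (Ts (t+1)).diagonals := by
            rw [(hseq t htr).2.2, ← hcre]
            exact Finset.mem_insert_self _ _
          exact mem_persist hseq (show t+1 ≤ s by omega) (by omega) hbase
            (fun k' hh1 hh2 heq => hmin k' (by omega) ⟨by omega, by omega, Or.inl heq⟩)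
        have hrem' : (F k).1 = d := by
          rcases hk3 with h | h
          · exact h
          · exact absurd (hpres k hk1 le_rfl) (h ▸ (hseq k hkr).2.1)
        refine arc_ord htopo _ hkr ⟨hk1, hkr, ?_⟩
        have := self_neighbor hm hseq hkr
        rw [hrem'] at this
        rw [hcre, hrem']
        exact this
    by_cases hkt' : k = t'
    · subst hkt'; exact hstep
    · have hklt : k < t' := by omega
      exact lt_trans hstep (ih k t' hklt ht'r (by omega) hk3 hev')

open Classical in
/-- The central ordering claim: if the diagonal created by flip `i` is a
neighbor of the diagonal removed by an earlier flip `j` at time `j`, then `j`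
precedes `i` in every topological order. -/
lemma claimO (hm : 3 ≤ m) (hseq : IsFlipSeq m r F Ts)
    (htopo : ∀ p q : Fin r, Arc m r F Ts (σ p).val (σ q).val → p < q)
    {j i : ℕ} (hji : j < i) (hi : i < r)
    (hnb : Neighbor m (Ts j) ((F i).2) ((F j).1)) :
    σ.symm ⟨j, by omega⟩ < σ.symm ⟨i, hi⟩ := by
  have hjr : j < r := by omega
  by_cases hxy : (F i).2 = (F j).1
  · exact event_ord hm hseq htopo (i - j) j i hji hi le_rfl (Or.inl rfl) (Or.inr hxy)
  · obtain ⟨hxmem, hymem, t, ht, hxt, hyt⟩ := hnb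
    obtain ⟨y1, y2, hy12, -, hyeq⟩ := (Ts j).isDiagonal _ hymem
    obtain ⟨p, p', hpeq, hp, hp', hsd1, hsd2, hsd3, hsd4, -, -, huniq⟩ :=
      flip_quad hm (hseq j hjr) y1 y2 hyeq
    have hnp := btw_ne hp
    have hnp' := btw_ne hp'
    have hpp' : p ≠ p' := fun h => btw_asymm hp (h ▸ hp')
    -- first removal of x = (F i).2 after j
    have hex : ∃ k, j < k ∧ k ≤ i ∧ (F k).1 = (F i).2 := by
      by_contra hno
      push_neg at hno
      have hmem_i : (F i).2 ∈ (Ts i).diagonals := by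
        refine mem_persist hseq (le_of_lt hji) (by omega) hxmem ?_
        intro k' h1 h2 heq
        rcases Nat.lt_or_ge j k' with hgt | hle
        · exact hno k' hgt (by omega) heq
        · have : k' = j := by omega
          subst this
          exact hxy heq.symm
      exact (hseq i hi).2.1 hmem_i
    have hfind : ∃ k, (j < k ∧ k ≤ i ∧ (F k).1 = (F i).2) ∧
        ∀ k' < k, ¬ (j < k' ∧ k' ≤ i ∧ (F k').1 = (F i).2) :=
      ⟨Nat.find hex, Nat.find_spec hex, fun _ h => Nat.find_min hex h⟩
    obtain ⟨k, ⟨hk1, hk2, hk3⟩, hmin⟩ := hfind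
    have hklt : k < i := by
      rcases Nat.lt_or_ge k i with h | h
      · exact h
      · exfalso
        have hki : k = i := by omega
        rw [hki] at hk3
        exact (hseq i hi).2.1 (hk3 ▸ (hseq i hi).1)
    have hkr : k < r := by omega
    have hpres : ∀ s, j < s → s ≤ k → (F k).1 ∈ (Ts s).diagonals := by
      intro s h1 h2
      rw [hk3]
      refine mem_persist hseq (show j ≤ s by omega) (by omega) hxmem ?_
      intro k' hh1 hh2 heq
      rcases Nat.lt_or_ge j k' with hgt | hle
      · exact hmin k' (by omega) ⟨hgt, by omega, heq⟩
      · have : k' = j := by omega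
        subst this
        exact hxy heq.symm
    -- construct the neighbor relation just after flip j
    have mk_nb : ∀ α β γ : Fin m, (F i).2 = {α, β} → (F j).2 = {β, γ} →
        IsSide m (Ts j) {α, γ} → α ≠ β → α ≠ γ → β ≠ γ →
        ({α, β} : Finset (Fin m)) ≠ (F j).1 → ({α, γ} : Finset (Fin m)) ≠ (F j).1 →
        Neighbor m (Ts (j+1)) ((F j).2) ((F i).2) := by
      intro α β γ hxq hnew hside hab hag hbg hneq1 hneq2
      have hw : ({α, β} : Finset (Fin m)) ∈ (Ts (j+1)).diagonals := by
        rw [(hseq j hjr).2.2]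
        exact Finset.mem_insert_of_mem
          (Finset.mem_erase.mpr ⟨hneq1, by rw [← hxq]; exact hxmem⟩)
      have h2 : IsSide m (Ts (j+1)) {α, γ} := by
        refine side_persist hseq (Nat.le_succ j) (by omega) hside ?_
        intro k' hh1 hh2
        have : k' = j := by omega
        subst this; exact fun h => hneq2 h.symm
      rw [hxq]
      exact nb_of_sides hseq hjr hab hag hbg hw h2 hnew
    obtain ⟨x1, x2, hx12, -, hxeq⟩ := (Ts j).isDiagonal _ hxmem
    have hnbj : Neighbor m (Ts (j+1)) ((F j).2) ((F i).2) := by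
      rcases huniq t ht hyt with hteq | hteq
      · have hsub := pair_subset_triple
          (show ({x1, x2} : Finset (Fin m)) ⊆ {y1, y2, p} by
            rw [← hxeq, ← hteq]; exact hxt)
        rcases hsub with hq | hq | hq | hq
        · exact absurd (hxeq.trans (hq.trans hyeq.symm)) hxy
        · refine mk_nb y1 p p' (hxeq.trans hq) hpeq hsd3
            (fun h => hnp.1 h.symm) (fun h => hnp'.2 h.symm) hpp' ?_ ?_
          · rw [hyeq]; intro h
            rcases pair_eq h with ⟨-, h4⟩ | ⟨h3, -⟩
            · exact hnp.2 h4
            · exact hy12 h3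
          · rw [hyeq]; intro h
            rcases pair_eq h with ⟨-, h4⟩ | ⟨h3, -⟩
            · exact hnp'.1 h4
            · exact hy12 h3
        · refine mk_nb y2 p p' (hxeq.trans hq) hpeq
            (by rw [Finset.pair_comm]; exact hsd4)
            (fun h => hnp.2 h.symm) (fun h => hnp'.1 h.symm) hpp' ?_ ?_
          · rw [hyeq]; intro h
            rcases pair_eq h with ⟨h3, -⟩ | ⟨-, h4⟩
            · exact hy12 h3.symm
            · exact hnp.1 h4
          · rw [hyeq]; intro h
            rcases pair_eq h with ⟨h3, -⟩ | ⟨-, h4⟩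
            · exact hy12 h3.symm
            · exact hnp'.2 h4
        · exact absurd hq hx12
      · have hsub := pair_subset_triple
          (show ({x1, x2} : Finset (Fin m)) ⊆ {y1, y2, p'} by
            rw [← hxeq, ← hteq]; exact hxt)
        rcases hsub with hq | hq | hq | hq
        · exact absurd (hxeq.trans (hq.trans hyeq.symm)) hxy
        · refine mk_nb y1 p' p (hxeq.trans hq) (hpeq.trans (Finset.pair_comm p p')) hsd1
            (fun h => hnp'.2 h.symm) (fun h => hnp.1 h.symm) (fun h => hpp' h.symm) ?_ ?_
          · rw [hyeq]; intro h
            rcases pair_eq h with ⟨-, h4⟩ | ⟨h3, -⟩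
            · exact hnp'.1 h4
            · exact hy12 h3
          · rw [hyeq]; intro h
            rcases pair_eq h with ⟨-, h4⟩ | ⟨h3, -⟩
            · exact hnp.2 h4
            · exact hy12 h3
        · refine mk_nb y2 p' p (hxeq.trans hq) (hpeq.trans (Finset.pair_comm p p'))
            (by rw [Finset.pair_comm]; exact hsd2)
            (fun h => hnp'.1 h.symm) (fun h => hnp.2 h.symm) (fun h => hpp' h.symm) ?_ ?_
          · rw [hyeq]; intro h
            rcases pair_eq h with ⟨h3, -⟩ | ⟨-, h4⟩
            · exact hy12 h3.symm
            · exact hnp'.2 h4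
          · rw [hyeq]; intro h
            rcases pair_eq h with ⟨h3, -⟩ | ⟨-, h4⟩
            · exact hy12 h3.symm
            · exact hnp.1 h4
        · exact absurd hq hx12
    have hord1 := claimP1 hm hseq htopo (k - j) j k hk1 hkr le_rfl hpres
      (by rw [hk3]; exact hnbj)
    have hord2 := event_ord hm hseq htopo (i - k) k i hklt hi le_rfl
      (Or.inl hk3) (Or.inr rfl)
    exact lt_trans hord1 hord2

end Events
/-- Let `F` be a flip sequence of length `r` transforming `Ts 0` into `Ts r`,
and let `π(F)` be a permutation of the flips of `F` that is a topological sort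
of the DAG `D_F` (the permuted sequence `G` places at position `p` the flip
`F (σ p)`), so that `π(F)` is itself a valid flip sequence, with triangulation
sequence `Ts'`, transforming `Ts 0` into `Ts r`. Then the DAG `D_{π(F)}`,
defined from the sequence `G = π(F)`, is equal (as a directed graph on the
same set of flips) to `D_F`: there is an arc from the flip at position `p` to
the flip at position `q` in `D_{π(F)}` if and only if `D_F` has an arc from
flip `σ p` to flip `σ q`. -/
theorem topological_sort_same_dag (m : ℕ) (hm : 3 ≤ m)
    (r : ℕ) (F : ℕ → Finset (Fin m) × Finset (Fin m)) (Ts : ℕ → Triangulation m)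
    (hseq : IsFlipSeq m r F Ts)
    (σ : Equiv.Perm (Fin r))
    (htopo : ∀ p q : Fin r, Arc m r F Ts (σ p).val (σ q).val → p < q)
    (G : ℕ → Finset (Fin m) × Finset (Fin m))
    (hG : ∀ p : Fin r, G p.val = F (σ p).val)
    (Ts' : ℕ → Triangulation m)
    (hseq' : IsFlipSeq m r G Ts') (h0 : Ts' 0 = Ts 0) (hr : Ts' r = Ts r) :
    ∀ p q : Fin r, Arc m r G Ts' p.val q.val ↔ Arc m r F Ts (σ p).val (σ q).val := by
  intro p q
  have hip : ((σ p) : Fin r).val < r := (σ p).isLt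
  have hjq : ((σ q) : Fin r).val < r := (σ q).isLt
  have hGp := hG p
  have hGq := hG q
  have hflip1 : IsFlip m (Ts' q.val) (Ts' (q.val + 1)) ((F (σ q).val).1) ((F (σ q).val).2) := by
    have := hseq' q.val q.isLt
    rwa [hGq] at this
  have hflip2 := hseq (σ q).val hjq
  have htrans : ∀ x, Neighbor m (Ts' q.val) x ((F (σ q).val).1) ↔
      Neighbor m (Ts (σ q).val) x ((F (σ q).val).1) :=
    fun x => ⟨neighbor_transfer hm hflip1 hflip2 x, neighbor_transfer hm hflip2 hflip1 x⟩
  constructor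
  · rintro ⟨hpq, hqr, hnb⟩
    have hnb' : Neighbor m (Ts (σ q).val) ((F (σ p).val).2) ((F (σ q).val).1) := by
      rw [hGp, hGq] at hnb
      exact (htrans _).mp hnb
    refine ⟨?_, hjq, hnb'⟩
    rcases Nat.lt_trichotomy ((σ p).val) ((σ q).val) with h | h | h
    · exact h
    · exfalso
      have : σ p = σ q := Fin.ext h
      have : p = q := σ.injective this
      rw [this] at hpq
      exact lt_irrefl _ hpq
    · exfalso
      have hord := claimO hm hseq htopo h hip hnb'
      have e1 : (⟨(σ q).val, by omega⟩ : Fin r) = σ q := rfl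
      have e2 : (⟨(σ p).val, hip⟩ : Fin r) = σ p := rfl
      rw [e1, e2, Equiv.symm_apply_apply, Equiv.symm_apply_apply] at hord
      have : q.val < p.val := hord
      omega
  · rintro ⟨hij, hjr', hnb⟩
    have hpq : p < q := htopo p q ⟨hij, hjr', hnb⟩
    refine ⟨hpq, q.isLt, ?_⟩
    rw [hGp, hGq]
    exact (htrans _).mpr hnb
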